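/- The intersection of the topological boundary ∂Γ with the closure of the positive cone Γ_+^n equals the union of the cones Γ_+^m over 0 ≤ m < m_*; that is, ∂Γ ∩ cl(Γ_+^n) = ⋃_{0 ≤ m < m_*} Γ_+^m. -/

import Mathlib

noncomputable section

/-- `ℝ^n` with the Euclidean norm. -/
abbrev EV (n : ℕ) := EuclideanSpace ℝ (Fin n)

/-- The positive cone `ℝ^n_+`. -/
def posCone (n : ℕ) : Set (EV n) := {x | ∀ i, 0 < x i}

/-- `Γ_+^m`: nonnegative vectors with exactly `m` positive coordinates (the remaining
`n - m` coordinates vanish); equivalently, all permutations of `(0,…,0,λ₁,…,λ_m)`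
with every `λ_i > 0`. -/
def gammaPlus (n m : ℕ) : Set (EV n) :=
  {x | (∀ i, 0 ≤ x i) ∧ (Finset.univ.filter fun i => 0 < x i).card = m}

/-- Invariance under permutations of coordinates. -/
def PermSymm {n : ℕ} (Γ : Set (EV n)) : Prop :=
  ∀ (σ : Equiv.Perm (Fin n)) (x : EV n), x ∈ Γ → WithLp.toLp 2 (fun i => x (σ i)) ∈ Γ

/-- `Γ` is a cone. -/
def IsConeSet {n : ℕ} (Γ : Set (EV n)) : Prop :=
  ∀ c : ℝ, 0 < c → ∀ x ∈ Γ, c • x ∈ Γ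

namespace Stmt1Aux

variable {n : ℕ} {Γ : Set (EV n)}

/-- A convex cone is closed under addition. -/
lemma add_mem (hΓc : Convex ℝ Γ) (hΓcone : IsConeSet Γ)
    {a b : EV n} (ha : a ∈ Γ) (hb : b ∈ Γ) : a + b ∈ Γ := by
  have h := hΓc ha hb (by norm_num : (0:ℝ) ≤ 1/2) (by norm_num : (0:ℝ) ≤ 1/2) (by norm_num)
  have h2 := hΓcone 2 (by norm_num) _ h
  have heq : (2:ℝ) • ((1/2:ℝ) • a + (1/2:ℝ) • b) = a + b := by module
  rwa [heq] at h2

/-- An open convex cone plus a closure point is in the cone. -/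
lemma add_closure_mem (hΓo : IsOpen Γ) (hΓc : Convex ℝ Γ) (hΓcone : IsConeSet Γ)
    {u v : EV n} (hu : u ∈ Γ) (hv : v ∈ closure Γ) : u + v ∈ Γ := by
  obtain ⟨ε, hε, hball⟩ := Metric.isOpen_iff.mp hΓo u hu
  obtain ⟨v', hv', hd⟩ := Metric.mem_closure_iff.mp hv ε hε
  have h1 : u + (v - v') ∈ Γ := by
    apply hball
    rw [Metric.mem_ball, dist_eq_norm]
    simpa [dist_eq_norm] using hd
  have h2 := add_mem hΓc hΓcone h1 hv'
  have heq : u + (v - v') + v' = u + v := by abel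
  rwa [heq] at h2

lemma orthant_closed : IsClosed {x : EV n | ∀ i, 0 ≤ x i} := by
  have : {x : EV n | ∀ i, 0 ≤ x i} = ⋂ i, {x : EV n | 0 ≤ x i} := by
    ext x; simp
  rw [this]
  exact isClosed_iInter fun i => isClosed_le continuous_const (PiLp.continuous_apply 2 _ i)

lemma orthant_subset_closure_posCone {x : EV n} (hx : ∀ i, 0 ≤ x i) :
    x ∈ closure (posCone n) := by
  rw [Metric.mem_closure_iff]
  intro ε hε
  set c : EV n := WithLp.toLp 2 (fun _ => (1:ℝ)) with hc
  set δ : ℝ := ε / (‖c‖ + 1) with hδ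
  have hcn : (0:ℝ) < ‖c‖ + 1 := by positivity
  have hδpos : 0 < δ := div_pos hε hcn
  refine ⟨x + δ • c, fun i => ?_, ?_⟩
  · have : (x + δ • c) i = x i + δ * 1 := by
      simp [c]
    rw [this]
    have := hx i
    linarith
  · rw [dist_eq_norm]
    have : x - (x + δ • c) = -(δ • c) := by abel
    rw [this, norm_neg, norm_smul, Real.norm_eq_abs, abs_of_pos hδpos]
    calc δ * ‖c‖ < δ * (‖c‖ + 1) := by nlinarith [norm_nonneg c]
    _ = ε := by
        rw [hδ]; field_simp

lemma gammaPlus_n_eq : gammaPlus n n = posCone n := by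
  ext x
  constructor
  · rintro ⟨hnn, hcard⟩ i
    have huniv : (Finset.univ.filter fun i => 0 < x i) = Finset.univ := by
      rw [← Finset.card_eq_iff_eq_univ]
      simpa using hcard
    have hi : i ∈ Finset.univ.filter fun i => 0 < x i := by
      rw [huniv]; exact Finset.mem_univ i
    exact (Finset.mem_filter.mp hi).2
  · intro hx
    refine ⟨fun i => (hx i).le, ?_⟩
    have : (Finset.univ.filter fun i => 0 < x i) = Finset.univ :=
      Finset.filter_true_of_mem fun i _ => hx i
    simp [this]

lemma closure_gammaPlus_n : closure (gammaPlus n n) = {x : EV n | ∀ i, 0 ≤ x i} := by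
  rw [gammaPlus_n_eq]
  apply Set.Subset.antisymm
  · exact closure_minimal (fun x hx i => (hx i).le) orthant_closed
  · exact fun x hx => orthant_subset_closure_posCone hx

lemma orthant_subset_closure (hΓpos : posCone n ⊆ Γ) {x : EV n} (hx : ∀ i, 0 ≤ x i) :
    x ∈ closure Γ := closure_mono hΓpos (orthant_subset_closure_posCone hx)

/-- Transfer: if one element of `Γ_+^m` lies in `Γ`, all of them do. -/
lemma transfer (hΓo : IsOpen Γ) (hΓs : PermSymm Γ) (hΓc : Convex ℝ Γ)
    (hΓcone : IsConeSet Γ) (hΓpos : posCone n ⊆ Γ) {m : ℕ}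
    {x : EV n} (hxΓ : x ∈ Γ) (hx : x ∈ gammaPlus n m)
    {y : EV n} (hy : y ∈ gammaPlus n m) : y ∈ Γ := by
  obtain ⟨hxnn, hxc⟩ := hx
  obtain ⟨hynn, hyc⟩ := hy
  set S : Finset (Fin n) := Finset.univ.filter fun i => 0 < x i with hS
  set T : Finset (Fin n) := Finset.univ.filter fun i => 0 < y i with hT
  rcases Nat.eq_zero_or_pos m with hm0 | hmpos
  · -- then y = x = 0
    have hTe : T = ∅ := Finset.card_eq_zero.mp (by omega)
    have hSe : S = ∅ := Finset.card_eq_zero.mp (by omega)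
    have hyx : y = x := by
      ext i
      have hy0 : ¬ 0 < y i := by
        intro h
        have hmem : i ∈ T := by simp [hT, h]
        simp [hTe] at hmem
      have hx0 : ¬ 0 < x i := by
        intro h
        have hmem : i ∈ S := by simp [hS, h]
        simp [hSe] at hmem
      have h1 : y i = 0 := le_antisymm (not_lt.mp hy0) (hynn i)
      have h2 : x i = 0 := le_antisymm (not_lt.mp hx0) (hxnn i)
      rw [h1, h2]
    rwa [hyx]
  · have hcardST : T.card = S.card := by rw [← hT, ← hS] at *; omega
    -- permutation sending T to S
    set e : {i // i ∈ T} ≃ {i // i ∈ S} := Finset.equivOfCardEq hcardST with he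
    set σ : Equiv.Perm (Fin n) := e.extendSubtype with hσ
    set x' : EV n := WithLp.toLp 2 (fun i => x (σ i)) with hx'
    have hx'Γ : x' ∈ Γ := hΓs σ x hxΓ
    have hx'T : ∀ i, i ∈ T → 0 < x' i := by
      intro i hi
      have : σ i ∈ S := e.extendSubtype_mem i hi
      rw [hS, Finset.mem_filter] at this
      exact this.2
    have hx'nT : ∀ i, i ∉ T → x' i = 0 := by
      intro i hi
      have hni : σ i ∉ S := e.extendSubtype_not_mem i hi
      rw [hS, Finset.mem_filter] at hni
      push_neg at hni
      exact le_antisymm (hni (Finset.mem_univ _)) (hxnn (σ i))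
    have hTne : T.Nonempty := Finset.card_pos.mp (by omega)
    set ε : ℝ := T.inf' hTne y with hε
    set M : ℝ := T.sup' hTne x' with hM
    have hεpos : 0 < ε := by
      rw [hε, Finset.lt_inf'_iff]
      intro i hi
      rw [hT, Finset.mem_filter] at hi
      exact hi.2
    have hMpos : 0 < M := by
      rw [hM, Finset.lt_sup'_iff]
      obtain ⟨i, hi⟩ := hTne
      exact ⟨i, hi, hx'T i hi⟩
    set c : ℝ := ε / M with hcdef
    have hcpos : 0 < c := div_pos hεpos hMpos
    have hkey : ∀ i, c * x' i ≤ y i := by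
      intro i
      by_cases hi : i ∈ T
      · have h1 : x' i ≤ M := Finset.le_sup' _ hi
        have h2 : ε ≤ y i := Finset.inf'_le _ hi
        have : c * x' i ≤ c * M := by nlinarith
        have hcM : c * M = ε := by
          rw [hcdef]; field_simp
        linarith
      · rw [hx'nT i hi]
        simpa using hynn i
    have hcx' : c • x' ∈ Γ := hΓcone c hcpos _ hx'Γ
    have hw : ∀ i, 0 ≤ (y - c • x') i := by
      intro i
      have := hkey i
      simp only [PiLp.sub_apply, PiLp.smul_apply, smul_eq_mul]
      linarith
    have := add_closure_mem hΓo hΓc hΓcone hcx' (orthant_subset_closure hΓpos hw)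
    have heq : c • x' + (y - c • x') = y := by abel
    rwa [heq] at this

/-- Upward closure: if `Γ_+^{m*} ⊆ Γ` and `m* ≤ m`, then any `x ∈ Γ_+^m` is in `Γ`. -/
lemma upward (hΓo : IsOpen Γ) (hΓc : Convex ℝ Γ) (hΓcone : IsConeSet Γ)
    (hΓpos : posCone n ⊆ Γ) {mStar m : ℕ} (hsub : gammaPlus n mStar ⊆ Γ)
    (hle : mStar ≤ m) {x : EV n} (hx : x ∈ gammaPlus n m) : x ∈ Γ := by
  obtain ⟨hxnn, hxc⟩ := hx
  set S : Finset (Fin n) := Finset.univ.filter fun i => 0 < x i with hS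
  obtain ⟨A, hAS, hAcard⟩ := Finset.exists_subset_card_eq (show mStar ≤ S.card by omega)
  set z : EV n := WithLp.toLp 2 (fun i => if i ∈ A then x i / 2 else 0) with hz
  have hzmem : z ∈ gammaPlus n mStar := by
    constructor
    · intro i
      rw [hz]
      by_cases hi : i ∈ A
      · simp only [PiLp.toLp_apply, hi, if_true]
        have := hxnn i; linarith
      · simp [hi]
    · have : (Finset.univ.filter fun i => 0 < z i) = A := by
        ext i
        simp only [Finset.mem_filter, Finset.mem_univ, true_and]
        constructor
        · intro hpos
          by_contra hni
          rw [hz] at hpos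
          simp [hni] at hpos
        · intro hi
          have hiS : i ∈ S := hAS hi
          rw [hS, Finset.mem_filter] at hiS
          rw [hz]
          simp only [PiLp.toLp_apply, hi, if_true]
          linarith [hiS.2]
      rw [this, hAcard]
  have hzΓ : z ∈ Γ := hsub hzmem
  have hw : ∀ i, 0 ≤ (x - z) i := by
    intro i
    simp only [PiLp.sub_apply]
    rw [hz]
    by_cases hi : i ∈ A
    · simp only [PiLp.toLp_apply, hi, if_true]
      have := hxnn i; linarith
    · simp only [PiLp.toLp_apply, hi, if_false]
      simpa using hxnn i
  have := add_closure_mem hΓo hΓc hΓcone hzΓ (orthant_subset_closure hΓpos hw)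
  have heq : z + (x - z) = x := by abel
  rwa [heq] at this

end Stmt1Aux

open Stmt1Aux in
/-- `∂Γ ∩ cl(Γ_+^n) = ⋃_{0 ≤ m < m_*} Γ_+^m`, where `m_*` is the least `m`
with `Γ_+^m ⊆ Γ`. -/
theorem stmt1 (n : ℕ) (hn : 2 ≤ n) (Γ : Set (EV n))
    (hΓo : IsOpen Γ) (hΓs : PermSymm Γ) (hΓc : Convex ℝ Γ)
    (hΓcone : IsConeSet Γ) (hΓpos : posCone n ⊆ Γ)
    (mStar : ℕ) (hmStar : IsLeast {m : ℕ | gammaPlus n m ⊆ Γ} mStar) :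
    frontier Γ ∩ closure (gammaPlus n n) = ⋃ m ∈ Finset.range mStar, gammaPlus n m := by
  obtain ⟨hmem, hlb⟩ := hmStar
  rw [closure_gammaPlus_n, hΓo.frontier_eq]
  ext x
  simp only [Set.mem_inter_iff, Set.mem_diff, Set.mem_setOf_eq, Set.mem_iUnion,
    Finset.mem_range, exists_prop]
  constructor
  · rintro ⟨⟨hxcl, hxnΓ⟩, hxnn⟩
    set m : ℕ := (Finset.univ.filter fun i => 0 < x i).card with hm
    have hxm : x ∈ gammaPlus n m := ⟨hxnn, rfl⟩
    refine ⟨m, ?_, hxm⟩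
    by_contra hge
    push_neg at hge
    exact hxnΓ (upward hΓo hΓc hΓcone hΓpos hmem hge hxm)
  · rintro ⟨m, hmlt, hxm⟩
    have hxnn := hxm.1
    refine ⟨⟨orthant_subset_closure hΓpos hxnn, ?_⟩, hxnn⟩
    intro hxΓ
    have : gammaPlus n m ⊆ Γ := fun y hy =>
      transfer hΓo hΓs hΓc hΓcone hΓpos hxΓ hxm hy
    have := hlb this
    omega
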